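/- Let α, β, γ, ψ be the real roots of x⁴ + ax³ + bx² + cx + d with α = −γ. For integers x₁, x₂, x₃, x₄, the squared Euclidean norm of x₁(α,β,γ,ψ) + x₂(β,γ,ψ,α) + x₃(γ,ψ,α,β) + x₄(ψ,α,β,γ) equals (a² − 2b)(x₁² + x₂² + x₃² + x₄²) + 4b(x₁x₃ + x₂x₄). -/
import Mathlib


theorem stmt_15 (a b c d α β γ ψ : ℝ) (hαγ : α = -γ)
    (h1 : β + ψ = -a) (h2 : -γ ^ 2 + β * ψ = b)
    (h3 : β * γ ^ 2 + γ ^ 2 * ψ = c) (h4 : -(β * γ ^ 2 * ψ) = d) :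
    ∀ x₁ x₂ x₃ x₄ : ℤ,
      ((x₁ : ℝ) * α + (x₂ : ℝ) * β + (x₃ : ℝ) * γ + (x₄ : ℝ) * ψ) ^ 2 +
        ((x₁ : ℝ) * β + (x₂ : ℝ) * γ + (x₃ : ℝ) * ψ + (x₄ : ℝ) * α) ^ 2 +
        ((x₁ : ℝ) * γ + (x₂ : ℝ) * ψ + (x₃ : ℝ) * α + (x₄ : ℝ) * β) ^ 2 +
        ((x₁ : ℝ) * ψ + (x₂ : ℝ) * α + (x₃ : ℝ) * β + (x₄ : ℝ) * γ) ^ 2 =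
      (a ^ 2 - 2 * b) * ((x₁ : ℝ) ^ 2 + (x₂ : ℝ) ^ 2 + (x₃ : ℝ) ^ 2 + (x₄ : ℝ) ^ 2) +
        4 * b * ((x₁ : ℝ) * (x₃ : ℝ) + (x₂ : ℝ) * (x₄ : ℝ)) := by
  intro x₁ x₂ x₃ x₄
  subst hαγ
  subst h2
  have ha : a = -(β + ψ) := by linarith
  subst ha
  ring
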